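/- Let α ∈ ℂ and let k ∈ ℂ satisfy k³ = 2^{-3/2} α e^{-iπ/4}. Then there exists such a k with Re k > 0 and Im k > 0 if and only if arg α ∈ (π/4, 7π/4), equivalently Re α < |Im α|. -/

import Mathlib

open Complex Real

lemma cube_root_quadrant (w : ℂ) (φ : ℝ) (hφ0 : 0 < φ) (hφ1 : φ < π/2)
    (hw : w ≠ 0) (h3 : Complex.exp ((3*φ : ℝ) * Complex.I) = Complex.exp ((w.arg : ℝ) * Complex.I)) :
    ∃ k : ℂ, k ^ 3 = w ∧ 0 < k.re ∧ 0 < k.im := by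
  have habs : (0:ℝ) < ‖w‖ := norm_pos_iff.2 hw
  set r : ℝ := ‖w‖ ^ ((1:ℝ)/3) with hr
  have hrpos : 0 < r := Real.rpow_pos_of_pos habs _
  refine ⟨(r : ℂ) * Complex.exp ((φ:ℝ) * Complex.I), ?_, ?_, ?_⟩
  · rw [mul_pow, ← Complex.exp_nat_mul]
    have h1 : ((r:ℝ) : ℂ) ^ 3 = (‖w‖ : ℂ) := by
      norm_cast
      rw [hr, ← Real.rpow_natCast (‖w‖ ^ ((1:ℝ)/3)) 3,
        ← Real.rpow_mul (norm_nonneg _)]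
      norm_num
    have h2 : (((3:ℕ)):ℂ) * ((φ:ℝ) * Complex.I) = ((3*φ : ℝ) : ℂ) * Complex.I := by push_cast; ring
    rw [h1, h2, h3, Complex.norm_mul_exp_arg_mul_I]
  · simp only [Complex.mul_re, Complex.ofReal_re, Complex.ofReal_im,
      Complex.exp_ofReal_mul_I_re, Complex.exp_ofReal_mul_I_im, zero_mul, sub_zero]
    exact mul_pos hrpos (Real.cos_pos_of_mem_Ioo ⟨by linarith [Real.pi_pos], hφ1⟩)
  · simp only [Complex.mul_im, Complex.ofReal_re, Complex.ofReal_im,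
      Complex.exp_ofReal_mul_I_re, Complex.exp_ofReal_mul_I_im, zero_mul, add_zero]
    exact mul_pos hrpos (Real.sin_pos_of_pos_of_lt_pi hφ0 (by linarith [Real.pi_pos]))

lemma quadrant_iff (w : ℂ) :
    (∃ k : ℂ, k ^ 3 = w ∧ 0 < k.re ∧ 0 < k.im) ↔ (0 < w.im ∨ w.re < 0) := by
  constructor
  · rintro ⟨k, rfl, hx, hy⟩
    set x := k.re; set y := k.im
    have hre : (k^3).re = x^3 - 3*x*y^2 := by
      simp [pow_succ, Complex.mul_re, Complex.mul_im]; ring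
    have him : (k^3).im = 3*x^2*y - y^3 := by
      simp [pow_succ, Complex.mul_re, Complex.mul_im]; ring
    by_cases h : 0 < (k^3).im
    · exact Or.inl h
    · right
      rw [hre]
      rw [him] at h
      push_neg at h
      have h3 : 3*x^2 ≤ y^2 := by nlinarith
      have h4 : x*(3*x^2) ≤ x*y^2 := mul_le_mul_of_nonneg_left h3 hx.le
      nlinarith [pow_pos hx 3]
  · intro h
    have hw : w ≠ 0 := by
      rintro rfl
      simp at h
    have hπ := Real.pi_pos
    have harg_le := Complex.arg_le_pi w
    have harg_gt := Complex.neg_pi_lt_arg w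
    by_cases hpos : 0 < w.arg
    · refine cube_root_quadrant w (w.arg/3) (by linarith) (by linarith) hw ?_
      congr 1
      push_cast
      ring
    · push_neg at hpos
      have him : w.im < 0 := by
        rcases lt_or_ge w.im 0 with h' | h'
        · exact h'
        · exfalso
          have h0 : 0 ≤ w.arg := Complex.arg_nonneg_iff.2 h'
          have h1 : w.arg = 0 := le_antisymm hpos h0
          rw [Complex.arg_eq_zero_iff] at h1
          rcases h with h | h
          · linarith [h1.2]
          · linarith [h1.1]
      have hre : w.re < 0 := by
        rcases h with h | h
        · linarith
        · exact h
      have hargeq := Complex.arg_of_re_neg_of_im_neg hre him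
      have habs : (0:ℝ) < ‖w‖ := norm_pos_iff.2 hw
      have ht1 : (-w).im / ‖w‖ < 1 := by
        rw [div_lt_one habs, Complex.neg_im]
        calc -w.im ≤ |w.im| := neg_le_abs _
          _ < ‖w‖ := Complex.abs_im_lt_norm.2 (ne_of_lt hre)
      have harcsin : Real.arcsin ((-w).im / ‖w‖) < π/2 :=
        Real.arcsin_lt_pi_div_two.2 ht1
      have hlt : w.arg < -(π/2) := by rw [hargeq]; linarith
      refine cube_root_quadrant w ((w.arg + 2*π)/3) (by linarith) (by linarith) hw ?_
      have : ((3 * ((w.arg + 2*π)/3) : ℝ) : ℂ) * Complex.I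
          = (w.arg : ℝ) * Complex.I + 2*π*Complex.I := by push_cast; ring
      rw [this, Complex.exp_add, Complex.exp_two_pi_mul_I, mul_one]

/-- Eigenvalue existence condition for the one-dimensional biharmonic operator with a
complex delta potential of coupling `α`: there is a solution `k` of
`k³ = 2^{-3/2} α e^{-iπ/4}` lying in the open first quadrant (`Re k > 0`, `Im k > 0`)
if and only if `Re α < |Im α|` (equivalently, `arg α ∈ (π/4, 7π/4)`). -/
theorem delta_1d_eigenvalue_condition (α : ℂ) :
    (∃ k : ℂ, k ^ 3 = ((2 : ℝ) ^ (-(3 : ℝ) / 2) : ℝ) * α * Complex.exp (-(π / 4) * Complex.I)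
        ∧ 0 < k.re ∧ 0 < k.im)
      ↔ α.re < |α.im| := by
  rw [quadrant_iff]
  set c : ℝ := (2 : ℝ) ^ (-(3 : ℝ) / 2) with hc
  have hcpos : 0 < c := Real.rpow_pos_of_pos (by norm_num) _
  set e : ℂ := Complex.exp (-(π / 4) * Complex.I) with he
  have here : e.re = Real.sqrt 2 / 2 := by
    rw [he]
    have : (-(↑π / 4) * Complex.I : ℂ) = ((-(π/4) : ℝ) : ℂ) * Complex.I := by push_cast; ring
    rw [this, Complex.exp_ofReal_mul_I_re, Real.cos_neg, Real.cos_pi_div_four]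
  have heim : e.im = -(Real.sqrt 2 / 2) := by
    rw [he]
    have : (-(↑π / 4) * Complex.I : ℂ) = ((-(π/4) : ℝ) : ℂ) * Complex.I := by push_cast; ring
    rw [this, Complex.exp_ofReal_mul_I_im, Real.sin_neg, Real.sin_pi_div_four]
  have hs : 0 < Real.sqrt 2 / 2 := by positivity
  have hwim : ((c : ℂ) * α * e).im = c * (Real.sqrt 2 / 2) * (α.im - α.re) := by
    simp [Complex.mul_im, Complex.mul_re, here, heim]; ring
  have hwre : ((c : ℂ) * α * e).re = c * (Real.sqrt 2 / 2) * (α.re + α.im) := by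
    simp [Complex.mul_im, Complex.mul_re, here, heim]; ring
  rw [hwim, hwre, lt_abs]
  have hcs : 0 < c * (Real.sqrt 2 / 2) := mul_pos hcpos hs
  constructor
  · rintro (h | h)
    · left; nlinarith
    · right; nlinarith
  · rintro (h | h)
    · left; nlinarith
    · right; nlinarith
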